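/- Fix ρ ∈ ℤ and a ρ-matching R for a multisegment m = Σ_{i∈I} Δ_i over ℤ. If R₂ dominates R₁ then Σ_{i ∈ A(R₂)} Δ_i ≤ Σ_{i ∈ A(R₁)} Δ_i in the sense that for every segment Δ, #{i ∈ A(R₂) : Δ_i ≥ Δ} ≤ #{i ∈ A(R₁) : Δ_i ≥ Δ}, where ≥ is the lexicographic order on segments by (e, b). -/

import Mathlib

/-- Precedence of segments over `ℤ`. -/
def SegPrec (a b a' b' : ℤ) : Prop := a < a' ∧ a' ≤ b + 1 ∧ b < b'

/-- Total (lexicographic) order on segments: `[a,b] ≤ [a',b']` iff `b < b'`, or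
`b = b'` and `a ≤ a'`. -/
def SegLE (a b a' b' : ℤ) : Prop := b < b' ∨ (b = b' ∧ a ≤ a')

/-- Strict version of `SegLE`. -/
def SegLT (a b a' b' : ℤ) : Prop := b < b' ∨ (b = b' ∧ a < a')

/-- A `ρ`-matching for the multisegment `(a, b)`: a one-to-one relation from
`Y^ρ = {i : b(Δ_i) = ρ}` to `X^ρ = {j : b(Δ_j) = ρ+1}` such that `Δ_i ≺ Δ_j` for each
matched pair. -/
def IsMatching {ι : Type} (a b : ι → ℤ) (ρ : ℤ) (R : Set (ι × ι)) : Prop :=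
  (∀ p ∈ R, a p.1 = ρ ∧ a p.2 = ρ + 1 ∧ SegPrec (a p.1) (b p.1) (a p.2) (b p.2)) ∧
  (∀ p ∈ R, ∀ q ∈ R, p.1 = q.1 → p = q) ∧
  (∀ p ∈ R, ∀ q ∈ R, p.2 = q.2 → p = q)

/-- `A(R)`: the unmatched elements of `Y^ρ`. -/
def unmatchedA {ι : Type} (a : ι → ℤ) (ρ : ℤ) (R : Set (ι × ι)) : Set ι :=
  {i | a i = ρ ∧ ∀ j, (i, j) ∉ R}

/-- `B(R)`: the unmatched elements of `X^ρ`. -/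
def unmatchedB {ι : Type} (a : ι → ℤ) (ρ : ℤ) (R : Set (ι × ι)) : Set ι :=
  {j | a j = ρ + 1 ∧ ∀ i, (i, j) ∉ R}

/-- A saturated `ρ`-matching. -/
def Saturated {ι : Type} (a b : ι → ℤ) (ρ : ℤ) (R : Set (ι × ι)) : Prop :=
  (∀ i ∈ unmatchedA a ρ R, ∀ j ∈ unmatchedB a ρ R,
    ¬ SegPrec (a i) (b i) (a j) (b j)) ∧
  (∀ p ∈ R, ∀ i' ∈ unmatchedA a ρ R,
    SegPrec (a i') (b i') (a p.2) (b p.2) → SegLE (a i') (b i') (a p.1) (b p.1))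

/-- `R₂` dominates `R₁` (one elementary move). -/
def Dominates {ι : Type} (a b : ι → ℤ) (ρ : ℤ) (R₁ R₂ : Set (ι × ι)) : Prop :=
  IsMatching a b ρ R₁ ∧ IsMatching a b ρ R₂ ∧
  (R₁ ⊆ R₂ ∨
    (∃ i j k : ι, R₂ \ R₁ = {(j, k)} ∧ R₁ \ R₂ = {(i, k)} ∧
      SegLT (a i) (b i) (a j) (b j)) ∨
    (∃ i j k : ι, R₂ \ R₁ = {(i, k)} ∧ R₁ \ R₂ = {(i, j)} ∧
      SegLT (a k) (b k) (a j) (b j)))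


/-- If `R₂` dominates `R₁`, then for every segment `Δ = [α,β]`,
`#{i ∈ A(R₂) : Δ_i ≥ Δ} ≤ #{i ∈ A(R₁) : Δ_i ≥ Δ}`. -/
lemma segLE_trans_lt {α β x y x' y' : ℤ} (h1 : SegLE α β x y) (h2 : SegLT x y x' y') :
    SegLE α β x' y' := by
  unfold SegLE SegLT at *; omega

lemma segLT_irrefl {x y : ℤ} (h : SegLT x y x y) : False := by
  unfold SegLT at h; omega

theorem stmt13 {ι : Type} [Fintype ι] (a b : ι → ℤ) (hab : ∀ i, a i ≤ b i) (ρ : ℤ)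
    (R₁ R₂ : Set (ι × ι)) (hdom : Dominates a b ρ R₁ R₂) :
    ∀ α β : ℤ, α ≤ β →
      ({i | i ∈ unmatchedA a ρ R₂ ∧ SegLE α β (a i) (b i)}).ncard ≤
        ({i | i ∈ unmatchedA a ρ R₁ ∧ SegLE α β (a i) (b i)}).ncard := by
  intro α β hαβ
  obtain ⟨hM1, hM2, hcase⟩ := hdom
  set S₁ := {i | i ∈ unmatchedA a ρ R₁ ∧ SegLE α β (a i) (b i)} with hS₁
  set S₂ := {i | i ∈ unmatchedA a ρ R₂ ∧ SegLE α β (a i) (b i)} with hS₂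
  have hfin1 : S₁.Finite := Set.toFinite _
  rcases hcase with hsub | ⟨i, j, k, h21, h12, hlt⟩ | ⟨i, j, k, h21, h12, hlt⟩
  · -- R₁ ⊆ R₂
    refine Set.ncard_le_ncard ?_ hfin1
    rintro x ⟨⟨hx1, hx2⟩, hx3⟩
    exact ⟨⟨hx1, fun j' hj' => hx2 j' (hsub hj')⟩, hx3⟩
  · -- swap in first coordinate
    have hik1 : (i, k) ∈ R₁ ∧ (i, k) ∉ R₂ := by
      have : (i, k) ∈ R₁ \ R₂ := by rw [h12]; rfl
      exact this
    have hjk2 : (j, k) ∈ R₂ ∧ (j, k) ∉ R₁ := by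
      have : (j, k) ∈ R₂ \ R₁ := by rw [h21]; rfl
      exact this
    have hij : i ≠ j := by
      rintro rfl; exact segLT_irrefl hlt
    -- membership transfer for i' ≠ i, ≠ j
    have htrans : ∀ i', i' ≠ i → i' ∈ S₂ → i' ∈ S₁ := by
      rintro i' hne ⟨⟨ha', hun⟩, hle⟩
      refine ⟨⟨ha', fun j' hj' => ?_⟩, hle⟩
      by_cases h : (i', j') ∈ R₂
      · exact hun j' h
      · have : (i', j') ∈ R₁ \ R₂ := ⟨hj', h⟩
        rw [h12] at this
        exact hne (congrArg Prod.fst this)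
    by_cases hi : i ∈ S₂
    · -- i ∈ S₂ : S₂ ⊆ insert i (S₁ \ {j}), j ∈ S₁
      have hjS1 : j ∈ S₁ := by
        have haj : a j = ρ := (hM2.1 _ hjk2.1).1
        refine ⟨⟨haj, fun j' hj' => ?_⟩, segLE_trans_lt hi.2 hlt⟩
        have hj'2 : (j, j') ∈ R₂ := by
          by_contra h
          have : (j, j') ∈ R₁ \ R₂ := ⟨hj', h⟩
          rw [h12] at this
          exact hij (congrArg Prod.fst this).symm
        have := hM2.2.1 _ hj'2 _ hjk2.1 rfl
        have : j' = k := congrArg Prod.snd this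
        exact hjk2.2 (this ▸ hj')
      have hsub2 : S₂ ⊆ insert i (S₁ \ {j}) := by
        rintro x hx
        by_cases hxi : x = i
        · exact Or.inl hxi
        · refine Or.inr ⟨htrans x hxi hx, ?_⟩
          rintro rfl
          exact hx.1.2 k hjk2.1
      calc S₂.ncard ≤ (insert i (S₁ \ {j})).ncard :=
            Set.ncard_le_ncard hsub2 (Set.toFinite _)
        _ ≤ (S₁ \ {j}).ncard + 1 := Set.ncard_insert_le _ _
        _ = S₁.ncard := Set.ncard_diff_singleton_add_one hjS1 hfin1
    · -- i ∉ S₂ : S₂ ⊆ S₁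
      refine Set.ncard_le_ncard ?_ hfin1
      intro x hx
      have hxi : x ≠ i := fun h => hi (h ▸ hx)
      exact htrans x hxi hx
  · -- swap in second coordinate: unmatched sets are equal
    have hij1 : (i, j) ∈ R₁ ∧ (i, j) ∉ R₂ := by
      have : (i, j) ∈ R₁ \ R₂ := by rw [h12]; rfl
      exact this
    have hik2 : (i, k) ∈ R₂ ∧ (i, k) ∉ R₁ := by
      have : (i, k) ∈ R₂ \ R₁ := by rw [h21]; rfl
      exact this
    have : S₂ = S₁ := by
      ext x
      constructor
      · rintro ⟨⟨ha', hun⟩, hle⟩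
        refine ⟨⟨ha', fun j' hj' => ?_⟩, hle⟩
        by_cases h : (x, j') ∈ R₂
        · exact hun j' h
        · have : (x, j') ∈ R₁ \ R₂ := ⟨hj', h⟩
          rw [h12] at this
          have hx : x = i := congrArg Prod.fst this
          exact hun k (hx ▸ hik2.1)
      · rintro ⟨⟨ha', hun⟩, hle⟩
        refine ⟨⟨ha', fun j' hj' => ?_⟩, hle⟩
        by_cases h : (x, j') ∈ R₁
        · exact hun j' h
        · have : (x, j') ∈ R₂ \ R₁ := ⟨hj', h⟩
          rw [h21] at this
          have hx : x = i := congrArg Prod.fst this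
          exact hun j (hx ▸ hij1.1)
    rw [this]
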